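/- (Conservation law for V₁, homogeneous case.) Let u be a C² solution of Δ_{H¹}u = 0 on an open set Ω ⊆ ℝ³. Define on Ω: A₁ = −½(tx−x²y−y³)u_x² + ½(tx−x²y−y³)u_y² + 2t(x³+xy²−ty)u_t² − (x³+xy²+ty)u_x u_y − [t²−(x²+y²)²]u_x u_t − 2t(x²+y²)u_y u_t − t·u·u_x − 2ty·u·u_t + y·u²; A₂ = ½(x³+ty+xy²)u_x² − ½(x³+ty+xy²)u_y² + 2t(x²y+y³+tx)u_t² − (tx−x²y−y³)u_x u_y + 2t(x²+y²)u_x u_t − [t²−(x²+y²)²]u_y u_t − t·u·u_y + 2tx·u·u_t − x·u²; A₃ = ½(t²−x⁴−4txy+2x²y²+3y⁴)u_x² + ½(t²+3x⁴+4txy+2x²y²−y⁴)u_y² − 2(x²+y²)[t²−(x²+y²)²]u_t² + 2[t(x²−y²)−2xy(x²+y²)]u_x u_y − 4(x²+y²)(tx−x²y−y³)u_x u_t − 4(x²+y²)(x³+ty+xy²)u_y u_t − 2ty·u·u_x + 2tx·u·u_y − 4t(x²+y²)·u·u_t + 2(x²+y²)u². Then ∂A₁/∂x + ∂A₂/∂y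 + ∂A₃/∂t = 0 at every point of Ω. -/

import Mathlib

set_option maxHeartbeats 4000000


/-- Partial derivative with respect to the first coordinate (x). -/
noncomputable def pdx (u : ℝ × ℝ × ℝ → ℝ) : ℝ × ℝ × ℝ → ℝ :=
  fun p => fderiv ℝ u p (1, 0, 0)

/-- Partial derivative with respect to the second coordinate (y). -/
noncomputable def pdy (u : ℝ × ℝ × ℝ → ℝ) : ℝ × ℝ × ℝ → ℝ :=
  fun p => fderiv ℝ u p (0, 1, 0)

/-- Partial derivative with respect to the third coordinate (t). -/
noncomputable def pdt (u : ℝ × ℝ × ℝ → ℝ) : ℝ × ℝ × ℝ → ℝ :=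
  fun p => fderiv ℝ u p (0, 0, 1)

/-- The Kohn–Laplace operator on the Heisenberg group H¹:
`Δ u = u_xx + u_yy + 4(x²+y²) u_tt + 4y u_xt − 4x u_yt`. -/
noncomputable def KohnLaplace (u : ℝ × ℝ × ℝ → ℝ) : ℝ × ℝ × ℝ → ℝ :=
  fun p => pdx (pdx u) p + pdy (pdy u) p
    + 4 * (p.1 ^ 2 + p.2.1 ^ 2) * pdt (pdt u) p
    + 4 * p.2.1 * pdt (pdx u) p - 4 * p.1 * pdt (pdy u) p


theorem pd_add' {f g : ℝ × ℝ × ℝ → ℝ} {p e : ℝ × ℝ × ℝ}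
    (hf : DifferentiableAt ℝ f p) (hg : DifferentiableAt ℝ g p) :
    fderiv ℝ (fun q => f q + g q) p e = fderiv ℝ f p e + fderiv ℝ g p e := by
  rw [fderiv_fun_add hf hg]; rfl

theorem pd_sub' {f g : ℝ × ℝ × ℝ → ℝ} {p e : ℝ × ℝ × ℝ}
    (hf : DifferentiableAt ℝ f p) (hg : DifferentiableAt ℝ g p) :
    fderiv ℝ (fun q => f q - g q) p e = fderiv ℝ f p e - fderiv ℝ g p e := by
  rw [fderiv_fun_sub hf hg]; rfl

theorem pd_mul' {f g : ℝ × ℝ × ℝ → ℝ} {p e : ℝ × ℝ × ℝ}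
    (hf : DifferentiableAt ℝ f p) (hg : DifferentiableAt ℝ g p) :
    fderiv ℝ (fun q => f q * g q) p e = f p * fderiv ℝ g p e + g p * fderiv ℝ f p e := by
  rw [fderiv_fun_mul hf hg]; rfl

theorem pd_neg' {f : ℝ × ℝ × ℝ → ℝ} {p e : ℝ × ℝ × ℝ} :
    fderiv ℝ (fun q => -f q) p e = -(fderiv ℝ f p e) := by
  rw [fderiv_fun_neg]; rfl

theorem pd_const' {c : ℝ} {p e : ℝ × ℝ × ℝ} :
    fderiv ℝ (fun _ : ℝ × ℝ × ℝ => c) p e = 0 := by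
  simp

theorem pd_sq' {f : ℝ × ℝ × ℝ → ℝ} {p e : ℝ × ℝ × ℝ}
    (hf : DifferentiableAt ℝ f p) :
    fderiv ℝ (fun q => f q ^ 2) p e = 2 * f p * fderiv ℝ f p e := by
  have h : (fun q => f q ^ 2) = fun q => f q * f q := by funext q; ring
  rw [h, pd_mul' hf hf]; ring

theorem pd_cube' {f : ℝ × ℝ × ℝ → ℝ} {p e : ℝ × ℝ × ℝ}
    (hf : DifferentiableAt ℝ f p) :
    fderiv ℝ (fun q => f q ^ 3) p e = 3 * f p ^ 2 * fderiv ℝ f p e := by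
  have h : (fun q => f q ^ 3) = fun q => f q * f q * f q := by funext q; ring
  rw [h, pd_mul' (f := fun q => f q * f q) (hf.mul hf) hf, pd_mul' hf hf]; ring

theorem pd_pow4' {f : ℝ × ℝ × ℝ → ℝ} {p e : ℝ × ℝ × ℝ}
    (hf : DifferentiableAt ℝ f p) :
    fderiv ℝ (fun q => f q ^ 4) p e = 4 * f p ^ 3 * fderiv ℝ f p e := by
  have h : (fun q => f q ^ 4) = fun q => f q * f q * (f q * f q) := by funext q; ring
  rw [h, pd_mul' (f := fun q => f q * f q) (g := fun q => f q * f q) (hf.mul hf) (hf.mul hf), pd_mul' hf hf]; ring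

theorem pd_x' {p e : ℝ × ℝ × ℝ} :
    fderiv ℝ (fun q : ℝ × ℝ × ℝ => q.1) p e = e.1 := by
  have h : HasFDerivAt (fun q : ℝ × ℝ × ℝ => q.1)
      (ContinuousLinearMap.fst ℝ ℝ (ℝ × ℝ)) p := hasFDerivAt_fst
  rw [h.fderiv]; rfl

theorem pd_y' {p e : ℝ × ℝ × ℝ} :
    fderiv ℝ (fun q : ℝ × ℝ × ℝ => q.2.1) p e = e.2.1 := by
  have h : HasFDerivAt (fun q : ℝ × ℝ × ℝ => q.2.1)
      ((ContinuousLinearMap.fst ℝ ℝ ℝ).comp (ContinuousLinearMap.snd ℝ ℝ (ℝ × ℝ))) p :=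
    hasFDerivAt_fst.comp p hasFDerivAt_snd
  rw [h.fderiv]; rfl

theorem pd_t' {p e : ℝ × ℝ × ℝ} :
    fderiv ℝ (fun q : ℝ × ℝ × ℝ => q.2.2) p e = e.2.2 := by
  have h : HasFDerivAt (fun q : ℝ × ℝ × ℝ => q.2.2)
      ((ContinuousLinearMap.snd ℝ ℝ ℝ).comp (ContinuousLinearMap.snd ℝ ℝ (ℝ × ℝ))) p :=
    hasFDerivAt_snd.comp p hasFDerivAt_snd
  rw [h.fderiv]; rfl

/-- conservation law for the Noether symmetry V₁ of the
homogeneous Kohn–Laplace equation Δ_{H¹}u = 0: Div(A) = 0, where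
(A₁,A₂,A₃) is the Noether current of
V₁ = (xt−x²y−y³)∂_x + (yt+x³+xy²)∂_y + (t²−(x²+y²)²)∂_t − tu∂_u. -/
theorem conservation_law_V1
    (Ω : Set (ℝ × ℝ × ℝ)) (hΩ : IsOpen Ω)
    (u : ℝ × ℝ × ℝ → ℝ) (hu : ContDiffOn ℝ 2 u Ω)
    (hsol : ∀ p ∈ Ω, KohnLaplace u p = 0) :
    ∀ p ∈ Ω,
      pdx (fun q =>
        let x := q.1; let y := q.2.1; let t := q.2.2
        let ux := pdx u q; let uy := pdy u q; let ut := pdt u q; let v := u q;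
        (-(1 / 2) * (t * x - x ^ 2 * y - y ^ 3) * ux ^ 2
        + (1 / 2) * (t * x - x ^ 2 * y - y ^ 3) * uy ^ 2
        + 2 * t * (x ^ 3 + x * y ^ 2 - t * y) * ut ^ 2
        - (x ^ 3 + x * y ^ 2 + t * y) * ux * uy
        - (t ^ 2 - (x ^ 2 + y ^ 2) ^ 2) * ux * ut
        - 2 * t * (x ^ 2 + y ^ 2) * uy * ut
        - t * v * ux - 2 * t * y * v * ut + y * v ^ 2)) p
      + pdy (fun q =>
        let x := q.1; let y := q.2.1; let t := q.2.2
        let ux := pdx u q; let uy := pdy u q; let ut := pdt u q; let v := u q;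
        ((1 / 2) * (x ^ 3 + t * y + x * y ^ 2) * ux ^ 2
        - (1 / 2) * (x ^ 3 + t * y + x * y ^ 2) * uy ^ 2
        + 2 * t * (x ^ 2 * y + y ^ 3 + t * x) * ut ^ 2
        - (t * x - x ^ 2 * y - y ^ 3) * ux * uy
        + 2 * t * (x ^ 2 + y ^ 2) * ux * ut
        - (t ^ 2 - (x ^ 2 + y ^ 2) ^ 2) * uy * ut
        - t * v * uy + 2 * t * x * v * ut - x * v ^ 2)) p
      + pdt (fun q =>
        let x := q.1; let y := q.2.1; let t := q.2.2
        let ux := pdx u q; let uy := pdy u q; let ut := pdt u q; let v := u q;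
        ((1 / 2) * (t ^ 2 - x ^ 4 - 4 * t * x * y + 2 * x ^ 2 * y ^ 2 + 3 * y ^ 4) * ux ^ 2
        + (1 / 2) * (t ^ 2 + 3 * x ^ 4 + 4 * t * x * y + 2 * x ^ 2 * y ^ 2 - y ^ 4) * uy ^ 2
        - 2 * (x ^ 2 + y ^ 2) * (t ^ 2 - (x ^ 2 + y ^ 2) ^ 2) * ut ^ 2
        + 2 * (t * (x ^ 2 - y ^ 2) - 2 * x * y * (x ^ 2 + y ^ 2)) * ux * uy
        - 4 * (x ^ 2 + y ^ 2) * (t * x - x ^ 2 * y - y ^ 3) * ux * ut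
        - 4 * (x ^ 2 + y ^ 2) * (x ^ 3 + t * y + x * y ^ 2) * uy * ut
        - 2 * t * y * v * ux + 2 * t * x * v * uy
        - 4 * t * (x ^ 2 + y ^ 2) * v * ut + 2 * (x ^ 2 + y ^ 2) * v ^ 2)) p = 0 := by
  intro p hp
  have hmem : Ω ∈ nhds p := hΩ.mem_nhds hp
  have hu2 : ContDiffAt ℝ 2 u p := hu.contDiffAt hmem
  have hud : DifferentiableAt ℝ u p := hu2.differentiableAt (by norm_num)
  have hf1 : ContDiffAt ℝ 1 (fderiv ℝ u) p := hu2.fderiv_right (by norm_num)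
  have hDf : DifferentiableAt ℝ (fderiv ℝ u) p := hf1.differentiableAt (by norm_num)
  have hdx : DifferentiableAt ℝ (fun q => fderiv ℝ u q (1, 0, 0)) p :=
    hDf.clm_apply (differentiableAt_const _)
  have hdy : DifferentiableAt ℝ (fun q => fderiv ℝ u q (0, 1, 0)) p :=
    hDf.clm_apply (differentiableAt_const _)
  have hdt : DifferentiableAt ℝ (fun q => fderiv ℝ u q (0, 0, 1)) p :=
    hDf.clm_apply (differentiableAt_const _)
  have key : ∀ w e : ℝ × ℝ × ℝ,
      fderiv ℝ (fun q => fderiv ℝ u q w) p e = fderiv ℝ (fderiv ℝ u) p e w := by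
    intro w e
    rw [fderiv_clm_apply hDf (differentiableAt_const w)]
    simp
  have hsym := hu2.isSymmSndFDerivAt (by simp)
  have hs21 : fderiv ℝ (fderiv ℝ u) p ((0:ℝ), (1:ℝ), (0:ℝ)) (1, 0, 0)
      = fderiv ℝ (fderiv ℝ u) p (1, 0, 0) (0, 1, 0) := hsym _ _
  have hs31 : fderiv ℝ (fderiv ℝ u) p ((0:ℝ), (0:ℝ), (1:ℝ)) (1, 0, 0)
      = fderiv ℝ (fderiv ℝ u) p (1, 0, 0) (0, 0, 1) := hsym _ _
  have hs32 : fderiv ℝ (fderiv ℝ u) p ((0:ℝ), (0:ℝ), (1:ℝ)) (0, 1, 0)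
      = fderiv ℝ (fderiv ℝ u) p (0, 1, 0) (0, 0, 1) := hsym _ _
  have upx : pdx u = fun q => fderiv ℝ u q (1, 0, 0) := rfl
  have upy : pdy u = fun q => fderiv ℝ u q (0, 1, 0) := rfl
  have upt : pdt u = fun q => fderiv ℝ u q (0, 0, 1) := rfl
  have hsol' := hsol p hp
  simp only [KohnLaplace, pdx, pdy, pdt, upx, upy, upt] at hsol'
  simp only [pdx, pdy, pdt, upx, upy, upt]
  simp (disch := fun_prop) only [pd_add', pd_sub', pd_mul', pd_sq', pd_cube', pd_pow4',
    pd_const', pd_x', pd_y', pd_t']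
  simp only [key] at hsol' ⊢
  simp only [hs21, hs31, hs32] at hsol' ⊢
  linear_combination (-(p.2.2 * u p
      + (p.2.2 * p.1 - p.1 ^ 2 * p.2.1 - p.2.1 ^ 3) * fderiv ℝ u p (1, 0, 0)
      + (p.2.2 * p.2.1 + p.1 ^ 3 + p.1 * p.2.1 ^ 2) * fderiv ℝ u p (0, 1, 0)
      + (p.2.2 ^ 2 - (p.1 ^ 2 + p.2.1 ^ 2) ^ 2) * fderiv ℝ u p (0, 0, 1))) * hsol'
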